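/- There is a constant c > 0 such that for every even natural number n ≥ c, every read-once (2n)-way branching program on inputs x : Fin n → Fin (2n) whose output on every injective x equals MedianBit(x) has more than 2^(n^(1/65)) nodes. -/

import Mathlib

/-- The least significant bit of the median (the `n/2`-th smallest) of the `n`
values `x i + 1`, each in `{1, …, 2n}`. -/
def medianBit (n : ℕ) (x : Fin n → Fin (2 * n)) : Bool :=
  decide ((((Finset.univ.image fun i => (x i : ℕ) + 1).sort (· ≤ ·)).getD (n / 2 - 1) 0) % 2 = 1)

/-- A `D`-way branching program on inputs `x : Fin n → D` with output labels in `R`: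
a finite set of nodes; each node is either an internal node labeled by an input index with
one successor per value in `D`, or a sink labeled by an output value. Acyclicity is
witnessed by a rank function decreasing along edges. -/
structure BranchingProgram (n : ℕ) (D R : Type*) where
  V : Type
  [fintypeV : Fintype V]
  source : V
  label : V → (Fin n × (D → V)) ⊕ R
  rank : V → ℕ
  wf : ∀ v i f d, label v = Sum.inl (i, f) → rank (f d) < rank v

attribute [instance] BranchingProgram.fintypeV

/-- The value computed from node `v` on input `x`. -/
def BranchingProgram.eval {n : ℕ} {D R : Type*} (B : BranchingProgram n D R)
    (x : Fin n → D) (v : B.V) : R :=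
  match h : B.label v with
  | Sum.inr r => r
  | Sum.inl (i, f) => B.eval x (f (x i))
termination_by B.rank v
decreasing_by exact B.wf v i f (x i) h

/-- There is an edge from `u` to `v`. -/
def BranchingProgram.Edge {n : ℕ} {D R : Type*} (B : BranchingProgram n D R)
    (u v : B.V) : Prop :=
  ∃ i f d, B.label u = Sum.inl (i, f) ∧ f d = v

/-- The input index queried at a node (`none` for sinks). -/
def BranchingProgram.qIdx {n : ℕ} {D R : Type*} (B : BranchingProgram n D R)
    (v : B.V) : Option (Fin n) :=
  Sum.elim (fun q => some q.1) (fun _ => none) (B.label v)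

/-- Read-once: along every directed path from the source, queried indices are distinct. -/
def BranchingProgram.ReadOnce {n : ℕ} {D R : Type*} (B : BranchingProgram n D R) : Prop :=
  ∀ p : List B.V, List.Chain B.Edge B.source p →
    ((B.source :: p).filterMap B.qIdx).Nodup

namespace BranchingProgram
variable {n : ℕ} {D R : Type*} (B : BranchingProgram n D R)

lemma eval_inr {x : Fin n → D} {v : B.V} {r : R} (h : B.label v = Sum.inr r) :
    B.eval x v = r := by
  rw [BranchingProgram.eval]; split <;> simp_all

lemma eval_inl {x : Fin n → D} {v : B.V} {i f} (h : B.label v = Sum.inl (i, f)) :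
    B.eval x v = B.eval x (f (x i)) := by
  rw [BranchingProgram.eval]; split <;> simp_all

/-- One computation step on input `x` (sinks are absorbing). -/
def step (x : Fin n → D) (v : B.V) : B.V :=
  match B.label v with
  | Sum.inl (i, f) => f (x i)
  | Sum.inr _ => v

lemma eval_step (x : Fin n → D) (v : B.V) : B.eval x (B.step x v) = B.eval x v := by
  unfold step
  rcases h : B.label v with ⟨i, f⟩ | r
  · exact (B.eval_inl h).symm
  · simp [B.eval_inr h]

/-- The node reached after `t` steps on input `x`. -/
def trace (x : Fin n → D) (t : ℕ) : B.V := (B.step x)^[t] B.source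

lemma eval_trace (x : Fin n → D) (t : ℕ) : B.eval x (B.trace x t) = B.eval x B.source := by
  induction t with
  | zero => rfl
  | succ t ih => rw [trace, Function.iterate_succ_apply', ← trace, eval_step, ih]

end BranchingProgram

lemma chain_snoc {α : Type*} {RR : α → α → Prop} {a b : α} {l : List α}
    (h : List.Chain RR a l) (h2 : RR ((a :: l).getLast (by simp)) b) :
    List.Chain RR a (l ++ [b]) := by
  induction l generalizing a with
  | nil => exact List.Chain.cons h2 List.Chain.nil
  | cons c l ih =>
      rcases h with ⟨⟩ | ⟨hac, hcl⟩
      · exact List.Chain.cons ‹_› (ih ‹_› (by simpa using h2))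

lemma getLast_snoc {α : Type*} {a b : α} {l : List α} :
    ((a :: (l ++ [b]))).getLast (by simp) = b := by
  simp [List.getLast_append]

namespace BranchingProgram
variable {n : ℕ} {D R : Type*} (B : BranchingProgram n D R)

/-- Key invariance lemma: if a chain from the source ending at `v` has already queried
every index in `J`, then `eval` from `v` does not depend on the values at `J`. -/
lemma eval_invariance (hRO : B.ReadOnce) (w w' : Fin n → D) (J : Finset (Fin n))
    (hww' : ∀ i, i ∉ J → w i = w' i) :
    ∀ N v (c : List B.V), B.rank v ≤ N → List.Chain B.Edge B.source c →
      (B.source :: c).getLast (by simp) = v →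
      (∀ j ∈ J, (some j) ∈ (B.source :: c).map B.qIdx) →
      (∀ j ∈ J, B.qIdx v ≠ some j) →
      B.eval w v = B.eval w' v := by
  intro N
  induction N with
  | zero =>
      intro v c hrk hc hlast hmem hq
      rcases h : B.label v with ⟨i, f⟩ | r
      · exact absurd (B.wf v i f (w i) h) (by omega)
      · rw [B.eval_inr h, B.eval_inr h]
  | succ N ih =>
      intro v c hrk hc hlast hmem hq
      rcases h : B.label v with ⟨i, f⟩ | r
      · have hiJ : i ∉ J := by
          intro hiJ
          exact hq i hiJ (by simp [BranchingProgram.qIdx, h])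
        have hwi : w i = w' i := hww' i hiJ
        rw [B.eval_inl h, B.eval_inl h, ← hwi]
        set u := f (w i) with hu
        have hedge : B.Edge v u := ⟨i, f, w i, h, rfl⟩
        have hc' : List.Chain B.Edge B.source (c ++ [u]) :=
          chain_snoc hc (by rw [hlast]; exact hedge)
        have hlast' : ((B.source :: (c ++ [u]))).getLast (by simp) = u := getLast_snoc
        have hmem' : ∀ j ∈ J, (some j) ∈ (B.source :: (c ++ [u])).map B.qIdx := by
          intro j hj
          have hmm := hmem j hj
          have hre : (B.source :: (c ++ [u])).map B.qIdx
              = (B.source :: c).map B.qIdx ++ [B.qIdx u] := by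
            rw [show (B.source :: (c ++ [u])) = (B.source :: c) ++ [u] by simp,
              List.map_append]; rfl
          rw [hre]
          exact List.mem_append_left _ hmm
        have hq' : ∀ j ∈ J, B.qIdx u ≠ some j := by
          intro j hj hqu
          have hnd := hRO (c ++ [u]) hc'
          have hmemj := hmem j hj
          -- j occurs in filterMap of (source :: c) and also as qIdx u at the end
          have hjin : (j : Fin n) ∈ (B.source :: c).filterMap B.qIdx := by
            rw [List.mem_filterMap]
            rcases List.mem_map.mp hmemj with ⟨a, ha, hqa⟩
            exact ⟨a, ha, hqa⟩
          have : ((B.source :: (c ++ [u]))).filterMap B.qIdx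
              = (B.source :: c).filterMap B.qIdx ++ [j] := by
            rw [show (B.source :: (c ++ [u])) = (B.source :: c) ++ [u] by simp,
              List.filterMap_append]
            simp [hqu]
          rw [this] at hnd
          have := List.disjoint_of_nodup_append hnd
          exact this hjin (by simp)
        have hrk' : B.rank u ≤ N := by
          have hlt := B.wf v i f (w i) h
          rw [← hu] at hlt
          omega
        exact ih u (c ++ [u]) hrk' hc' hlast' hmem' hq'
      · rw [B.eval_inr h, B.eval_inr h]

end BranchingProgram

lemma getLast_eq_of_eq_snoc {α : Type*} {a b : α} {l l' : List α} (h : l = l' ++ [b]) :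
    (a :: l).getLast (by simp) = b := by
  subst h; exact getLast_snoc

lemma filterMap_singleton' {α β : Type*} (f : α → Option β) (x : α) :
    List.filterMap f [x] = (f x).toList := by
  rcases h : f x with _ | b <;> simp [List.filterMap_cons, h]

namespace BranchingProgram
variable {n : ℕ} {D R : Type*} (B : BranchingProgram n D R)

/-- `v` is an internal (query) node. -/
def Internal (v : B.V) : Prop := ∃ i f, B.label v = Sum.inl (i, f)

/-- One step of the adaptive walk: feed the `k`-th read with value `a k`. -/
def astep (a : ℕ → D) (s : B.V × List (Fin n)) : B.V × List (Fin n) :=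
  match B.label s.1 with
  | Sum.inl (i, f) => (f (a s.2.length), s.2 ++ [i])
  | Sum.inr _ => s

def awalk (a : ℕ → D) (t : ℕ) : B.V × List (Fin n) := (B.astep a)^[t] (B.source, [])

variable (a : ℕ → D)

lemma awalk_succ (t : ℕ) : B.awalk a (t+1) = B.astep a (B.awalk a t) := by
  rw [awalk, Function.iterate_succ_apply', ← awalk]

lemma awalk_succ_inl {t : ℕ} {i f} (h : B.label (B.awalk a t).1 = Sum.inl (i, f)) :
    B.awalk a (t+1) = (f (a (B.awalk a t).2.length), (B.awalk a t).2 ++ [i]) := by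
  rw [B.awalk_succ a t]; unfold astep; simp only [h]

lemma awalk_succ_inr {t : ℕ} {r} (h : B.label (B.awalk a t).1 = Sum.inr r) :
    B.awalk a (t+1) = B.awalk a t := by
  rw [B.awalk_succ a t]; unfold astep; simp only [h]

lemma awalk_len {t : ℕ} (hint : ∀ k < t, B.Internal (B.awalk a k).1) :
    (B.awalk a t).2.length = t := by
  induction t with
  | zero => rfl
  | succ t ih =>
      obtain ⟨i, f, h⟩ := hint t (by omega)
      rw [B.awalk_succ_inl a h]
      simp [ih (fun k hk => hint k (by omega))]

lemma awalk_prefix {s t : ℕ} (hst : s ≤ t) :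
    (B.awalk a s).2 <+: (B.awalk a t).2 := by
  induction t with
  | zero => simpa using (by omega : s = 0) ▸ List.prefix_refl _
  | succ t ih =>
      rcases Nat.lt_or_ge s (t+1) with h | h
      · refine (ih (by omega)).trans ?_
        rcases hl : B.label (B.awalk a t).1 with ⟨i, f⟩ | r
        · rw [B.awalk_succ_inl a hl]; exact List.prefix_append _ _
        · rw [B.awalk_succ_inr a hl]
      · have : s = t + 1 := by omega
        subst this; exact List.prefix_refl _

/-- The list of nodes visited (after each of the first `t` steps). -/
def nlist (t : ℕ) : List B.V := (List.range t).map (fun k => (B.awalk a (k+1)).1)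

lemma nlist_succ (t : ℕ) : B.nlist a (t+1) = B.nlist a t ++ [(B.awalk a (t+1)).1] := by
  simp [nlist, List.range_succ]

lemma nlist_getLast (t : ℕ) :
    (B.source :: B.nlist a t).getLast (by simp) = (B.awalk a t).1 := by
  induction t with
  | zero => rfl
  | succ t ih => exact getLast_eq_of_eq_snoc (B.nlist_succ a t)

lemma nlist_chain {t : ℕ} (hint : ∀ k < t, B.Internal (B.awalk a k).1) :
    List.Chain B.Edge B.source (B.nlist a t) := by
  induction t with
  | zero => exact List.Chain.nil
  | succ t ih =>
      have hch := ih (fun k hk => hint k (by omega))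
      obtain ⟨i, f, h⟩ := hint t (by omega)
      rw [B.nlist_succ a t]
      refine chain_snoc hch ?_
      rw [B.nlist_getLast a t]
      exact ⟨i, f, a (B.awalk a t).2.length, h, by rw [B.awalk_succ_inl a h]⟩

lemma nlist_filterMap {t : ℕ} (hint : ∀ k < t, B.Internal (B.awalk a k).1) :
    (B.source :: B.nlist a t).filterMap B.qIdx
      = (B.awalk a t).2 ++ (B.qIdx (B.awalk a t).1).toList := by
  induction t with
  | zero =>
      show (B.qIdx B.source).toList = [] ++ (B.qIdx B.source).toList
      simp
  | succ t ih =>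
      obtain ⟨i, f, h⟩ := hint t (by omega)
      have hq : B.qIdx (B.awalk a t).1 = some i := by simp [BranchingProgram.qIdx, h]
      rw [B.nlist_succ a t, show B.source :: (B.nlist a t ++ [(B.awalk a (t+1)).1])
          = (B.source :: B.nlist a t) ++ [(B.awalk a (t+1)).1] by simp,
        List.filterMap_append, ih (fun k hk => hint k (by omega)), hq,
        filterMap_singleton', B.awalk_succ_inl a h]
      simp

lemma awalk_nodup (hRO : B.ReadOnce) {t : ℕ}
    (hint : ∀ k < t, B.Internal (B.awalk a k).1) :
    ((B.awalk a t).2 ++ (B.qIdx (B.awalk a t).1).toList).Nodup := by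
  rw [← B.nlist_filterMap a hint]
  exact hRO _ (B.nlist_chain a hint)

lemma awalk_get {t k : ℕ} (hk : k < t)
    (hint : ∀ j < t, B.Internal (B.awalk a j).1)
    {i f} (h : B.label (B.awalk a k).1 = Sum.inl (i, f)) :
    ((B.awalk a t).2)[k]? = some i := by
  have hlenk : (B.awalk a k).2.length = k := B.awalk_len a (fun j hj => hint j (by omega))
  have hk1 : (B.awalk a (k+1)).2 = (B.awalk a k).2 ++ [i] := by
    rw [B.awalk_succ_inl a h]
  obtain ⟨rest, hrest⟩ := B.awalk_prefix a (show k+1 ≤ t by omega)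
  rw [← hrest, hk1]
  rw [show ((B.awalk a k).2 ++ [i]) ++ rest = (B.awalk a k).2 ++ ([i] ++ rest) by simp,
    List.getElem?_append_right (by omega)]
  simp [hlenk]

/-- Consistency: any input `w` that agrees with the fed values follows the adaptive walk. -/
lemma trace_awalk {t : ℕ} (hint : ∀ k < t, B.Internal (B.awalk a k).1)
    (w : Fin n → D)
    (hw : ∀ k < t, ∀ i f, B.label (B.awalk a k).1 = Sum.inl (i, f) → w i = a k) :
    B.trace w t = (B.awalk a t).1 := by
  induction t with
  | zero => rfl
  | succ t ih =>
      obtain ⟨i, f, h⟩ := hint t (by omega)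
      have hlt : (B.awalk a t).2.length = t := B.awalk_len a (fun k hk => hint k (by omega))
      rw [trace, Function.iterate_succ_apply', ← trace,
        ih (fun k hk => hint k (by omega)) (fun k hk => hw k (by omega)),
        B.awalk_succ_inl a h]
      show B.step w (B.awalk a t).1 = _
      unfold step
      simp only [h, hlt]
      rw [hw t (by omega) i f h]

end BranchingProgram

/-- In a `<`-sorted list, the number of elements smaller than the `k`-th entry is `k`. -/
lemma countP_lt_of_sorted (l : List ℕ) (hs : l.Pairwise (· < ·)) :
    ∀ k (hk : k < l.length), l.countP (fun z => z < l.get ⟨k, hk⟩) = k := by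
  induction l with
  | nil => intro k hk; simp at hk
  | cons x xs ih =>
      have hx : ∀ z ∈ xs, x < z := fun z hz => (List.pairwise_cons.mp hs).1 z hz
      intro k hk
      match k with
      | 0 =>
          rw [List.countP_cons]
          simp only [List.get]
          have h1 : ∀ z ∈ xs, ¬ (z < x) := fun z hz => by
            have := hx z hz; omega
          have : xs.countP (fun z => z < x) = 0 := by
            rw [List.countP_eq_zero]
            intro z hz
            simpa using h1 z hz
          simp [this]
      | k + 1 =>
          have hk' : k < xs.length := by simpa using hk
          have hxg : x < xs.get ⟨k, hk'⟩ := hx _ (xs.get_mem _)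
          rw [List.countP_cons]
          simp only [List.get]
          rw [ih (List.pairwise_cons.mp hs).2 k hk']
          simp only [List.get_eq_getElem] at hxg
          simp [hxg]

/-- If `T` has `2m` elements, `y ∈ T`, and exactly `m - 1` elements of `T` are below `y`,
then `y` is the `m`-th smallest element of `T`. -/
lemma median_spec {m : ℕ} (hm : 1 ≤ m) (T : Finset ℕ) (hcard : T.card = 2 * m)
    {y : ℕ} (hy : y ∈ T) (hb : (T.filter (fun z => z < y)).card = m - 1) :
    (T.sort (· ≤ ·)).getD (m - 1) 0 = y := by
  set l := T.sort (· ≤ ·) with hl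
  have hlen : l.length = 2 * m := by rw [hl, Finset.length_sort, hcard]
  have hmlt : m - 1 < l.length := by omega
  rw [List.getD_eq_getElem _ _ hmlt]
  -- countP of l equals filter card of T
  have hcount : l.countP (fun z => decide (z < y)) = (T.filter (fun z => z < y)).card := by
    have h1 : (l : Multiset ℕ) = T.val := Finset.sort_eq T _
    rw [← Multiset.coe_countP, h1, Multiset.countP_eq_card_filter]
    rfl
  have hsort : l.Pairwise (· < ·) := (Finset.sortedLT_sort T).pairwise
  -- find the index of y
  have hyl : y ∈ l := (Finset.mem_sort _).mpr hy
  obtain ⟨⟨k, hk⟩, hky⟩ := List.get_of_mem hyl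
  have h2 : l.countP (fun z => z < l.get ⟨k, hk⟩) = k := countP_lt_of_sorted l hsort k hk
  rw [hky] at h2
  have h3 : l.countP (fun z => decide (z < y)) = m - 1 := by
    rw [hcount, hb]
  have : k = m - 1 := by omega
  subst this
  exact hky

section MkInput

variable {n : ℕ}

/-- The element of `Fin (2*n)` representing the value `k ∈ {1, …, 2n}`. -/
def fv (hn : 0 < n) (k : ℕ) : Fin (2*n) := ⟨(k-1) % (2*n), Nat.mod_lt _ (by omega)⟩

lemma fv_val (hn : 0 < n) {k : ℕ} (h1 : 1 ≤ k) (h2 : k ≤ 2*n) :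
    ((fv hn k : Fin (2*n)) : ℕ) = k - 1 := by
  show (k-1) % (2*n) = k - 1
  exact Nat.mod_eq_of_lt (by omega)

lemma fv_val_add_one (hn : 0 < n) {k : ℕ} (h1 : 1 ≤ k) (h2 : k ≤ 2*n) :
    ((fv hn k : Fin (2*n)) : ℕ) + 1 = k := by
  rw [fv_val hn h1 h2]; omega

/-- Assemble an input: values `vals k` at the positions listed in `L` (in order), and
values from `Tf` (via a bijection) on the remaining positions `Sc`. -/
noncomputable def mkNat (L : List (Fin n)) (vals : ℕ → ℕ) (Sc : Finset (Fin n)) (Tf : Finset ℕ)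
    (hcard : Fintype.card (Sc : Type) = Fintype.card (Tf : Type)) : Fin n → ℕ :=
  fun i => if h : i ∈ Sc then ((Fintype.equivOfCardEq hcard) ⟨i, h⟩ : ℕ)
    else vals (L.idxOf i)

variable {L : List (Fin n)} {vals : ℕ → ℕ} {Sc : Finset (Fin n)} {Tf : Finset ℕ}
  {hcard : Fintype.card (Sc : Type) = Fintype.card (Tf : Type)}

lemma mkNat_read (hSc : Sc = Finset.univ \ L.toFinset) (hL : L.Nodup)
    {k : ℕ} (hk : k < L.length) :
    mkNat L vals Sc Tf hcard (L.get ⟨k, hk⟩) = vals k := by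
  have hmem : L.get ⟨k, hk⟩ ∈ L := L.get_mem _
  rw [mkNat, dif_neg (by simp [hSc, hmem])]
  congr 1
  simpa using hL.idxOf_getElem k hk

lemma mkNat_fill {i : Fin n} (hi : i ∈ Sc) :
    mkNat L vals Sc Tf hcard i ∈ Tf := by
  rw [mkNat, dif_pos hi]
  exact ((Fintype.equivOfCardEq hcard) _).2

lemma mkNat_image (hSc : Sc = Finset.univ \ L.toFinset) (hL : L.Nodup) :
    Finset.univ.image (mkNat L vals Sc Tf hcard)
      = (Finset.range L.length).image vals ∪ Tf := by
  apply Finset.Subset.antisymm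
  · intro z hz
    rw [Finset.mem_image] at hz
    obtain ⟨i, -, hi⟩ := hz
    by_cases h : i ∈ L
    · obtain ⟨⟨k, hk⟩, rfl⟩ := List.get_of_mem h
      rw [mkNat_read hSc hL hk] at hi
      exact Finset.mem_union_left _ (Finset.mem_image.mpr ⟨k, Finset.mem_range.mpr hk, hi⟩)
    · have h' : i ∈ Sc := by simp [hSc, h]
      exact Finset.mem_union_right _ (hi ▸ mkNat_fill h')
  · intro z hz
    rw [Finset.mem_union] at hz
    rcases hz with hz | hz
    · rw [Finset.mem_image] at hz
      obtain ⟨k, hk, rfl⟩ := hz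
      rw [Finset.mem_range] at hk
      exact Finset.mem_image.mpr ⟨L.get ⟨k, hk⟩, Finset.mem_univ _, mkNat_read hSc hL hk⟩
    · obtain ⟨⟨i, hi⟩, hzi⟩ := (Fintype.equivOfCardEq hcard).surjective ⟨z, hz⟩
      refine Finset.mem_image.mpr ⟨i, Finset.mem_univ _, ?_⟩
      rw [mkNat, dif_pos hi, hzi]

lemma mkNat_injective (hSc : Sc = Finset.univ \ L.toFinset) (hL : L.Nodup)
    (hvi : ∀ k k', k < L.length → k' < L.length → vals k = vals k' → k = k')
    (hdisj : ∀ k < L.length, vals k ∉ Tf) :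
    Function.Injective (mkNat L vals Sc Tf hcard) := by
  intro i i' he
  by_cases h : i ∈ L <;> by_cases h' : i' ∈ L
  · obtain ⟨⟨k, hk⟩, rfl⟩ := List.get_of_mem h
    obtain ⟨⟨k', hk'⟩, rfl⟩ := List.get_of_mem h'
    rw [mkNat_read hSc hL hk, mkNat_read hSc hL hk'] at he
    have := hvi k k' hk hk' he
    subst this; rfl
  · obtain ⟨⟨k, hk⟩, rfl⟩ := List.get_of_mem h
    rw [mkNat_read hSc hL hk] at he
    exact absurd (he ▸ mkNat_fill (by simp [hSc, h'])) (hdisj k hk)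
  · obtain ⟨⟨k', hk'⟩, rfl⟩ := List.get_of_mem h'
    rw [mkNat_read hSc hL hk'] at he
    exact absurd (he ▸ mkNat_fill (by simp [hSc, h])) (hdisj k' hk')
  · rw [mkNat, dif_pos (by simp [hSc, h]), mkNat, dif_pos (by simp [hSc, h'])] at he
    have := (Fintype.equivOfCardEq hcard).injective (Subtype.ext he)
    exact congrArg Subtype.val this

lemma mkNat_bounds (hSc : Sc = Finset.univ \ L.toFinset)
    (hvb : ∀ k < L.length, 1 ≤ vals k ∧ vals k ≤ 2*n)
    (hTb : ∀ z ∈ Tf, 1 ≤ z ∧ z ≤ 2*n) (i : Fin n) :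
    1 ≤ mkNat L vals Sc Tf hcard i ∧ mkNat L vals Sc Tf hcard i ≤ 2*n := by
  rw [mkNat]
  split
  · exact hTb _ ((Fintype.equivOfCardEq hcard) _).2
  · next h =>
      have hiL : i ∈ L := by
        by_contra h2
        exact h (by simp [hSc, h2])
      exact hvb _ (List.idxOf_lt_length_iff.mpr hiL)

/-- The actual input associated with `mkNat`. -/
noncomputable def mkInp (hn : 0 < n) (L : List (Fin n)) (vals : ℕ → ℕ) (Sc : Finset (Fin n))
    (Tf : Finset ℕ) (hcard : Fintype.card (Sc : Type) = Fintype.card (Tf : Type)) :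
    Fin n → Fin (2*n) :=
  fun i => fv hn (mkNat L vals Sc Tf hcard i)

lemma mkInp_val (hn : 0 < n) (hSc : Sc = Finset.univ \ L.toFinset)
    (hvb : ∀ k < L.length, 1 ≤ vals k ∧ vals k ≤ 2*n)
    (hTb : ∀ z ∈ Tf, 1 ≤ z ∧ z ≤ 2*n) (i : Fin n) :
    ((mkInp hn L vals Sc Tf hcard i : Fin (2*n)) : ℕ) + 1 = mkNat L vals Sc Tf hcard i := by
  have := mkNat_bounds hSc hvb hTb (hcard := hcard) i
  exact fv_val_add_one hn this.1 this.2

lemma mkInp_injective (hn : 0 < n) (hSc : Sc = Finset.univ \ L.toFinset) (hL : L.Nodup)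
    (hvi : ∀ k k', k < L.length → k' < L.length → vals k = vals k' → k = k')
    (hdisj : ∀ k < L.length, vals k ∉ Tf)
    (hvb : ∀ k < L.length, 1 ≤ vals k ∧ vals k ≤ 2*n)
    (hTb : ∀ z ∈ Tf, 1 ≤ z ∧ z ≤ 2*n) :
    Function.Injective (mkInp hn L vals Sc Tf hcard) := by
  intro i i' he
  apply mkNat_injective hSc hL hvi hdisj (hcard := hcard)
  have h1 := mkInp_val hn hSc hvb hTb (hcard := hcard) i
  have h2 := mkInp_val hn hSc hvb hTb (hcard := hcard) i'
  rw [← h1, ← h2]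
  have := congrArg (fun z : Fin (2*n) => (z : ℕ) + 1) he
  simpa [mkInp] using this

lemma mkInp_image (hn : 0 < n) (hSc : Sc = Finset.univ \ L.toFinset) (hL : L.Nodup)
    (hvb : ∀ k < L.length, 1 ≤ vals k ∧ vals k ≤ 2*n)
    (hTb : ∀ z ∈ Tf, 1 ≤ z ∧ z ≤ 2*n) :
    (Finset.univ.image fun i => ((mkInp hn L vals Sc Tf hcard i : Fin (2*n)) : ℕ) + 1)
      = (Finset.range L.length).image vals ∪ Tf := by
  rw [show (fun i => ((mkInp hn L vals Sc Tf hcard i : Fin (2*n)) : ℕ) + 1)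
      = mkNat L vals Sc Tf hcard from funext (mkInp_val hn hSc hvb hTb)]
  exact mkNat_image hSc hL

lemma mkInp_read (hn : 0 < n) (hSc : Sc = Finset.univ \ L.toFinset) (hL : L.Nodup)
    {k : ℕ} (hk : k < L.length) :
    mkInp hn L vals Sc Tf hcard (L.get ⟨k, hk⟩) = fv hn (vals k) := by
  rw [mkInp, mkNat_read hSc hL hk]

end MkInput

section Sets

variable (m : ℕ) (ε : ℕ → Bool)

/-- The `k`-th value of the hard family: one of `{m+2k+1, m+2k+2}` according to `ε k`. -/
def avals (k : ℕ) : ℕ := m + 2*k + 2 - (ε k).toNat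

def tinyS (r : ℕ) : Finset ℕ := Finset.Icc 1 r
def hugeS (s : ℕ) : Finset ℕ := Finset.Icc (3*m+1) (3*m+s)

lemma avals_ge {k : ℕ} : m + 1 ≤ avals m ε k := by
  have : (ε k).toNat ≤ 1 := by cases (ε k) <;> simp
  unfold avals; omega

lemma avals_le {k t : ℕ} (h : k < t) : avals m ε k ≤ m + 2*t := by
  have : (ε k).toNat ≤ 1 := by cases (ε k) <;> simp
  unfold avals; omega

lemma avals_inj {k k' : ℕ} (h : avals m ε k = avals m ε k') : k = k' := by
  have h1 : (ε k).toNat ≤ 1 := by cases (ε k) <;> simp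
  have h2 : (ε k').toNat ≤ 1 := by cases (ε k') <;> simp
  unfold avals at h; omega

lemma avals_mono {k r : ℕ} (h : k < r) : avals m ε k < avals m ε r := by
  have h1 : (ε k).toNat ≤ 1 := by cases (ε k) <;> simp
  have h2 : (ε r).toNat ≤ 1 := by cases (ε r) <;> simp
  unfold avals; omega

lemma avals_lt_avals {k r : ℕ} : avals m ε k < avals m ε r ↔ k < r := by
  constructor
  · intro h
    by_contra hge
    rcases Nat.eq_or_lt_of_le (Nat.le_of_not_lt hge) with he | hlt
    · subst he; exact lt_irrefl _ h
    · exact absurd h (Nat.not_lt.mpr (Nat.le_of_lt (avals_mono m ε hlt)))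
  · exact avals_mono m ε

lemma Aset_card (t : ℕ) : ((Finset.range t).image (avals m ε)).card = t := by
  rw [Finset.card_image_of_injective _ (fun k k' h => avals_inj m ε h), Finset.card_range]

lemma mem_Aset_bounds {t z : ℕ} (hz : z ∈ (Finset.range t).image (avals m ε)) :
    m + 1 ≤ z ∧ z ≤ m + 2*t := by
  rw [Finset.mem_image] at hz
  obtain ⟨k, hk, rfl⟩ := hz
  exact ⟨avals_ge m ε, avals_le m ε (Finset.mem_range.mp hk)⟩

lemma tinyS_card (r : ℕ) : (tinyS r).card = r := by
  rw [tinyS, Nat.card_Icc]; omega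

lemma hugeS_card (s : ℕ) : (hugeS m s).card = s := by
  rw [hugeS, Nat.card_Icc]; omega

lemma mem_tinyS {r z : ℕ} : z ∈ tinyS r ↔ 1 ≤ z ∧ z ≤ r := Finset.mem_Icc

lemma mem_hugeS {s z : ℕ} : z ∈ hugeS m s ↔ 3*m+1 ≤ z ∧ z ≤ 3*m+s := Finset.mem_Icc

/-- First median computation: `A-prefix ∪ [1,m] ∪ huge` has median `m`. -/
lemma medianM1 {t : ℕ} (hm : 1 ≤ m) (ht : t ≤ m) :
    ((((Finset.range t).image (avals m ε) ∪ (tinyS m ∪ hugeS m (m - t))).sort (· ≤ ·)).getD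
      (m - 1) 0) = m := by
  set A := (Finset.range t).image (avals m ε) with hA
  have hd1 : Disjoint A (tinyS m) := by
    rw [Finset.disjoint_left]
    intro z hz hz'
    have := mem_Aset_bounds m ε hz
    have := mem_tinyS.mp hz'
    omega
  have hd2 : Disjoint A (hugeS m (m - t)) := by
    rw [Finset.disjoint_left]
    intro z hz hz'
    have := mem_Aset_bounds m ε hz
    have := (mem_hugeS m).mp hz'
    omega
  have hd3 : Disjoint (tinyS m) (hugeS m (m - t)) := by
    rw [Finset.disjoint_left]
    intro z hz hz'
    have := mem_tinyS.mp hz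
    have := (mem_hugeS m).mp hz'
    omega
  apply median_spec hm
  · rw [Finset.card_union_of_disjoint (by
        rw [Finset.disjoint_union_right]; exact ⟨hd1, hd2⟩),
      Finset.card_union_of_disjoint hd3, Aset_card, tinyS_card, hugeS_card]
    omega
  · exact Finset.mem_union_right _ (Finset.mem_union_left _ (mem_tinyS.mpr (by omega)))
  · rw [Finset.filter_union, Finset.filter_union]
    rw [Finset.filter_false_of_mem (show ∀ z ∈ A, ¬ z < m by
        intro z hz; have := mem_Aset_bounds m ε hz; omega)]
    rw [Finset.filter_false_of_mem (show ∀ z ∈ hugeS m (m-t), ¬ z < m by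
        intro z hz; have := (mem_hugeS m).mp hz; omega)]
    rw [show (tinyS m).filter (fun z => z < m) = tinyS (m-1) by
      ext z; rw [Finset.mem_filter, mem_tinyS, mem_tinyS]; omega]
    rw [Finset.empty_union, Finset.union_empty, tinyS_card]


lemma u'_notmem {t : ℕ} :
    (if ε 0 ∧ 0 < t then m+2 else m+1) ∉ (Finset.range t).image (avals m ε) := by
  intro hmem
  rw [Finset.mem_image] at hmem
  obtain ⟨k, hk, hval⟩ := hmem
  have h1 : (ε k).toNat ≤ 1 := by cases h : (ε k) <;> simp [h]
  by_cases h0 : ε 0 ∧ 0 < t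
  · rw [if_pos h0] at hval
    have hk0 : k = 0 := by unfold avals at hval; omega
    subst hk0
    have : (ε 0).toNat = 1 := by rw [h0.1]; rfl
    unfold avals at hval; omega
  · rw [if_neg h0] at hval
    have hk0 : k = 0 := by unfold avals at hval; omega
    subst hk0
    rw [Finset.mem_range] at hk
    have h0' : ¬ (ε 0) := fun hh => h0 ⟨hh, hk⟩
    have : (ε 0).toNat = 0 := by rw [Bool.toNat_eq_zero]; simpa using h0'
    unfold avals at hval; omega

lemma hugeS_zero : hugeS m 0 = ∅ := by
  rw [hugeS]
  exact Finset.Icc_eq_empty (by omega)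

lemma tinyS_insert (hm : 1 ≤ m) : tinyS m = insert m (tinyS (m-1)) := by
  ext z
  rw [mem_tinyS, Finset.mem_insert, mem_tinyS]
  omega

/-- Second median computation: `A-prefix ∪ [1,m-1] ∪ {u'} ∪ huge` has median `m+1`. -/
lemma medianM2 {t : ℕ} (hm : 3 ≤ m) (ht : t ≤ m) :
    ((((Finset.range t).image (avals m ε) ∪
        (tinyS (m-1) ∪ insert (if ε 0 ∧ 0 < t then m+2 else m+1) (hugeS m (m - t)))).sort
      (· ≤ ·)).getD (m - 1) 0) = m + 1 := by
  set u' := if ε 0 ∧ 0 < t then m+2 else m+1 with hu'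
  have hu'b : m + 1 ≤ u' ∧ u' ≤ m + 2 := by rw [hu']; split <;> omega
  set A := (Finset.range t).image (avals m ε) with hA
  have hu'A : u' ∉ A := by rw [hu', hA]; exact u'_notmem m ε
  have hd1 : Disjoint A (tinyS (m-1)) := by
    rw [Finset.disjoint_left]; intro z hz hz'
    have := mem_Aset_bounds m ε hz; have := mem_tinyS.mp hz'; omega
  have hd2 : Disjoint A (insert u' (hugeS m (m - t))) := by
    rw [Finset.disjoint_left]; intro z hz hz'
    rw [Finset.mem_insert] at hz'
    rcases hz' with rfl | hz'
    · exact hu'A hz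
    · have := mem_Aset_bounds m ε hz; have := (mem_hugeS m).mp hz'; omega
  have hd3 : Disjoint (tinyS (m-1)) (insert u' (hugeS m (m - t))) := by
    rw [Finset.disjoint_left]; intro z hz hz'
    have := mem_tinyS.mp hz
    rw [Finset.mem_insert] at hz'
    rcases hz' with rfl | hz'
    · omega
    · have := (mem_hugeS m).mp hz'; omega
  have hd4 : u' ∉ hugeS m (m - t) := by
    intro hz; have := (mem_hugeS m).mp hz; omega
  apply median_spec (by omega)
  · rw [Finset.card_union_of_disjoint (by
        rw [Finset.disjoint_union_right]; exact ⟨hd1, hd2⟩),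
      Finset.card_union_of_disjoint hd3, Aset_card, tinyS_card,
      Finset.card_insert_of_notMem hd4, hugeS_card]
    omega
  · -- m+1 is in the set
    by_cases h0 : ε 0 ∧ 0 < t
    · refine Finset.mem_union_left _ ?_
      rw [hA, Finset.mem_image]
      refine ⟨0, Finset.mem_range.mpr h0.2, ?_⟩
      have : (ε 0).toNat = 1 := by rw [h0.1]; rfl
      unfold avals; omega
    · refine Finset.mem_union_right _ (Finset.mem_union_right _ ?_)
      rw [hu', if_neg h0]
      exact Finset.mem_insert_self _ _
  · rw [Finset.filter_union, Finset.filter_union]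
    rw [Finset.filter_false_of_mem (show ∀ z ∈ A, ¬ z < m+1 by
        intro z hz; have := mem_Aset_bounds m ε hz; omega)]
    rw [Finset.filter_false_of_mem (show ∀ z ∈ insert u' (hugeS m (m-t)), ¬ z < m+1 by
        intro z hz
        rw [Finset.mem_insert] at hz
        rcases hz with rfl | hz
        · omega
        · have := (mem_hugeS m).mp hz; omega)]
    rw [Finset.filter_true_of_mem (fun z hz => by
        have := mem_tinyS.mp hz; omega)]
    rw [Finset.empty_union, Finset.union_empty, tinyS_card]

/-- Third median computation: `A ∪ [1,m-1-r] ∪ huge(r+1)` has median the `(r+1)`-st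
smallest element of `A`. -/
lemma medianM3 {r : ℕ} (hm : 1 ≤ m) (hr : r < m) :
    ((((Finset.range m).image (avals m ε) ∪ (tinyS (m-1-r) ∪ hugeS m (r+1))).sort
      (· ≤ ·)).getD (m - 1) 0) = avals m ε r := by
  set A := (Finset.range m).image (avals m ε) with hA
  have hyb : m + 1 ≤ avals m ε r ∧ avals m ε r ≤ 3*m := by
    have h1 := avals_ge m ε (k := r)
    have h2 := avals_le m ε hr
    omega
  have hd1 : Disjoint A (tinyS (m-1-r)) := by
    rw [Finset.disjoint_left]; intro z hz hz'
    have := mem_Aset_bounds m ε hz; have := mem_tinyS.mp hz'; omega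
  have hd2 : Disjoint A (hugeS m (r+1)) := by
    rw [Finset.disjoint_left]; intro z hz hz'
    have h1 := mem_Aset_bounds m ε hz; have := (mem_hugeS m).mp hz'; omega
  have hd3 : Disjoint (tinyS (m-1-r)) (hugeS m (r+1)) := by
    rw [Finset.disjoint_left]; intro z hz hz'
    have := mem_tinyS.mp hz; have := (mem_hugeS m).mp hz'; omega
  apply median_spec hm
  · rw [Finset.card_union_of_disjoint (by
        rw [Finset.disjoint_union_right]; exact ⟨hd1, hd2⟩),
      Finset.card_union_of_disjoint hd3, Aset_card, tinyS_card, hugeS_card]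
    omega
  · exact Finset.mem_union_left _ (Finset.mem_image.mpr ⟨r, Finset.mem_range.mpr hr, rfl⟩)
  · rw [Finset.filter_union, Finset.filter_union]
    rw [Finset.filter_false_of_mem (show ∀ z ∈ hugeS m (r+1), ¬ z < avals m ε r by
        intro z hz; have := (mem_hugeS m).mp hz; omega)]
    rw [Finset.filter_true_of_mem (show ∀ z ∈ tinyS (m-1-r), z < avals m ε r by
        intro z hz; have := mem_tinyS.mp hz; omega)]
    rw [hA, Finset.filter_image]
    rw [show (Finset.range m).filter (fun k => avals m ε k < avals m ε r)
        = Finset.range r by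
      ext k
      rw [Finset.mem_filter, Finset.mem_range, Finset.mem_range, avals_lt_avals]
      omega]
    rw [Finset.union_empty,
      Finset.card_union_of_disjoint (by
        rw [Finset.disjoint_left]; intro z hz hz'
        have := mem_Aset_bounds m ε (t := r) hz
        have := mem_tinyS.mp hz'
        omega),
      Finset.card_image_of_injective _ (fun k k' h => avals_inj m ε h),
      Finset.card_range, tinyS_card]
    omega


lemma reshape1 (hm : 1 ≤ m) :
    (Finset.range (m+1)).image (fun k => if k < m then avals m ε k else m) ∪ tinyS (m-1)
      = (Finset.range m).image (avals m ε) ∪ (tinyS m ∪ hugeS m (m - m)) := by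
  have h1 : (Finset.range (m+1)).image (fun k => if k < m then avals m ε k else m)
      = insert m ((Finset.range m).image (avals m ε)) := by
    rw [Finset.range_add_one, Finset.image_insert, if_neg (lt_irrefl m)]
    congr 1
    apply Finset.image_congr
    intro k hk
    rw [Finset.mem_coe, Finset.mem_range] at hk
    simp [hk]
  rw [h1, Nat.sub_self, hugeS_zero, Finset.union_empty, tinyS_insert m hm,
    Finset.insert_union, Finset.union_insert]

lemma reshape2 (hm : 1 ≤ m) :
    (Finset.range (m+1)).image
        (fun k => if k < m then avals m ε k else (if ε 0 ∧ 0 < m then m+2 else m+1))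
        ∪ tinyS (m-1)
      = (Finset.range m).image (avals m ε)
        ∪ (tinyS (m-1) ∪ insert (if ε 0 ∧ 0 < m then m+2 else m+1) (hugeS m (m - m))) := by
  set u' := if ε 0 ∧ 0 < m then m+2 else m+1 with hu'
  have h1 : (Finset.range (m+1)).image (fun k => if k < m then avals m ε k else u')
      = insert u' ((Finset.range m).image (avals m ε)) := by
    rw [Finset.range_add_one, Finset.image_insert, if_neg (lt_irrefl m)]
    congr 1
    apply Finset.image_congr
    intro k hk
    rw [Finset.mem_coe, Finset.mem_range] at hk
    simp [hk]
  rw [h1, Nat.sub_self, hugeS_zero]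
  ext z
  simp only [Finset.mem_union, Finset.mem_insert, Finset.union_empty]
  tauto

end Sets


section Main

open BranchingProgram

variable {m : ℕ}

/-- The adaptive feed: the `k`-th value read is the `k`-th element of `A_ε`. -/
def feedI (hp : 0 < 2*m) (ε : ℕ → Bool) : ℕ → Fin (2*(2*m)) :=
  fun k => fv hp (avals m ε k)

variable (B : BranchingProgram (2*m) (Fin (2*(2*m))) Bool)

/-- Generic computation of `medianBit` on an assembled input. -/
lemma medianBit_mkInp (hp : 0 < 2*m) (hm : 1 ≤ m) {L : List (Fin (2*m))} {vals : ℕ → ℕ}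
    {Sc : Finset (Fin (2*m))} {Tf : Finset ℕ}
    {hcard : Fintype.card (Sc : Type) = Fintype.card (Tf : Type)}
    (hSc : Sc = Finset.univ \ L.toFinset) (hL : L.Nodup)
    (hvb : ∀ k < L.length, 1 ≤ vals k ∧ vals k ≤ 2*(2*m))
    (hTb : ∀ z ∈ Tf, 1 ≤ z ∧ z ≤ 2*(2*m)) {y : ℕ}
    (hmed : ((((Finset.range L.length).image vals ∪ Tf).sort (· ≤ ·)).getD (m-1) 0) = y) :
    medianBit (2*m) (mkInp hp L vals Sc Tf hcard) = decide (y % 2 = 1) := by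
  rw [medianBit]
  rw [mkInp_image hp hSc hL hvb hTb]
  rw [show (2*m)/2 - 1 = m - 1 by omega, hmed]

/-- Consistency of an input with the adaptive walk. -/
lemma trace_eq (hp : 0 < 2*m) (ε : ℕ → Bool) {t : ℕ}
    (hint : ∀ k < t, B.Internal ((B.awalk (feedI hp ε) k).1)) (w : Fin (2*m) → Fin (2*(2*m)))
    (hw : ∀ k (hk : k < t),
      w (((B.awalk (feedI hp ε) t).2).get
        ⟨k, by rw [B.awalk_len _ hint]; exact hk⟩) = feedI hp ε k) :
    B.trace w t = (B.awalk (feedI hp ε) t).1 := by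
  apply B.trace_awalk _ hint
  intro k hk i f hlab
  have hg := B.awalk_get (feedI hp ε) hk hint hlab
  have hk2 : k < (B.awalk (feedI hp ε) t).2.length := by rw [B.awalk_len _ hint]; exact hk
  have hget : ((B.awalk (feedI hp ε) t).2).get ⟨k, hk2⟩ = i := by
    rw [List.getElem?_eq_getElem hk2] at hg
    exact Option.some_inj.mp hg
  rw [← hget]
  exact hw k hk

/-- Any node within the first `m` steps of the `ε`-walk is on the node list. -/
lemma awalk_fst_mem (a : ℕ → Fin (2*(2*m))) {k t : ℕ} (hk : k ≤ t) :
    (B.awalk a k).1 ∈ B.source :: B.nlist a t := by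
  match k with
  | 0 => exact List.mem_cons_self
  | k + 1 =>
      refine List.mem_cons_of_mem _ ?_
      rw [BranchingProgram.nlist]
      exact List.mem_map.mpr ⟨k, List.mem_range.mpr (by omega), rfl⟩

/-- Every index read on the walk appears among the queried indices of the node list. -/
lemma mem_map_qIdx (a : ℕ → Fin (2*(2*m))) {t : ℕ}
    (hint : ∀ k < t, B.Internal ((B.awalk a k).1)) {j : Fin (2*m)}
    (hj : j ∈ (B.awalk a t).2) :
    some j ∈ (B.source :: B.nlist a t).map B.qIdx := by
  obtain ⟨⟨k, hk⟩, rfl⟩ := List.get_of_mem hj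
  have hkt : k < t := by
    have := B.awalk_len a hint
    omega
  obtain ⟨i, f, hlab⟩ := hint k hkt
  have hg := B.awalk_get a hkt hint hlab
  have hget : ((B.awalk a t).2).get ⟨k, hk⟩ = i := by
    rw [List.getElem?_eq_getElem hk] at hg
    exact Option.some_inj.mp hg
  rw [hget]
  refine List.mem_map.mpr ⟨(B.awalk a k).1, awalk_fst_mem B a (by omega), ?_⟩
  simp [BranchingProgram.qIdx, hlab]

/-- The node reached at time `t` does not re-query an index read along the walk. -/
lemma qIdx_not_read (hRO : B.ReadOnce) (a : ℕ → Fin (2*(2*m))) {t : ℕ}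
    (hint : ∀ k < t, B.Internal ((B.awalk a k).1)) {j : Fin (2*m)}
    (hj : j ∈ (B.awalk a t).2) :
    B.qIdx ((B.awalk a t).1) ≠ some j := by
  intro hq
  have hnd := B.awalk_nodup a hRO hint
  rw [hq] at hnd
  have := List.disjoint_of_nodup_append hnd
  exact this hj (by simp)

/-- The walk indices are distinct. -/
lemma awalk_list_nodup (hRO : B.ReadOnce) (a : ℕ → Fin (2*(2*m))) {t : ℕ}
    (hint : ∀ k < t, B.Internal ((B.awalk a k).1)) :
    ((B.awalk a t).2).Nodup :=
  (B.awalk_nodup a hRO hint).of_append_left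

lemma sink_contra (hRO : B.ReadOnce)
    (hCorr : ∀ x, Function.Injective x → B.eval x B.source = medianBit (2*m) x)
    (hm : 5 ≤ m) (hp : 0 < 2*m) (ε : ℕ → Bool) {t : ℕ} (ht : t < m)
    (hint : ∀ k < t, B.Internal ((B.awalk (feedI hp ε) k).1))
    {b : Bool} (hsink : B.label ((B.awalk (feedI hp ε) t).1) = Sum.inr b) : False := by
  set a := feedI hp ε with ha
  set L := (B.awalk a t).2 with hLdef
  have hlen : L.length = t := B.awalk_len a hint
  have hnd : L.Nodup := awalk_list_nodup B hRO a hint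
  set Sc : Finset (Fin (2*m)) := Finset.univ \ L.toFinset with hSc
  have hScCard : Sc.card = 2*m - t := by
    rw [hSc, Finset.card_sdiff_of_subset (Finset.subset_univ _), Finset.card_univ, Fintype.card_fin,
      List.toFinset_card_of_nodup hnd, hlen]
  have hvb : ∀ k < L.length, 1 ≤ avals m ε k ∧ avals m ε k ≤ 2*(2*m) := by
    intro k hk
    rw [hlen] at hk
    have h1 := avals_ge m ε (k := k)
    have h2 := avals_le m ε hk
    omega
  have hvi : ∀ k k', k < L.length → k' < L.length → avals m ε k = avals m ε k' → k = k' :=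
    fun k k' _ _ h => avals_inj m ε h
  set u' := if ε 0 ∧ 0 < t then m+2 else m+1 with hu'
  have hu'b : m+1 ≤ u' ∧ u' ≤ m+2 := by rw [hu']; split <;> omega
  -- first completion
  set Tf₁ := tinyS m ∪ hugeS m (m - t) with hTf₁
  have hd1 : Disjoint (tinyS m) (hugeS m (m - t)) := by
    rw [Finset.disjoint_left]
    intro z hz hz'
    have := mem_tinyS.mp hz; have := (mem_hugeS m).mp hz'; omega
  have hTf₁card : Tf₁.card = 2*m - t := by
    rw [hTf₁, Finset.card_union_of_disjoint hd1, tinyS_card, hugeS_card]; omega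
  have hc1 : Fintype.card (Sc : Type) = Fintype.card (Tf₁ : Type) := by
    rw [Fintype.card_coe, Fintype.card_coe, hScCard, hTf₁card]
  have hTb1 : ∀ z ∈ Tf₁, 1 ≤ z ∧ z ≤ 2*(2*m) := by
    intro z hz
    rw [hTf₁, Finset.mem_union] at hz
    rcases hz with hz | hz
    · have := mem_tinyS.mp hz; omega
    · have := (mem_hugeS m).mp hz; omega
  have hdisj1 : ∀ k < L.length, avals m ε k ∉ Tf₁ := by
    intro k hk hmem
    rw [hlen] at hk
    have h1 := avals_ge m ε (k := k)
    have h2 := avals_le m ε hk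
    rw [hTf₁, Finset.mem_union] at hmem
    rcases hmem with hz | hz
    · have := mem_tinyS.mp hz; omega
    · have := (mem_hugeS m).mp hz; omega
  set w := mkInp hp L (avals m ε) Sc Tf₁ hc1 with hw
  have winj : Function.Injective w := mkInp_injective hp hSc hnd hvi hdisj1 hvb hTb1
  have htr : B.trace w t = (B.awalk a t).1 := by
    apply trace_eq B hp ε hint
    intro k hk
    exact mkInp_read hp hSc hnd (by rw [hlen]; exact hk)
  have heval : B.eval w B.source = b := by
    rw [← B.eval_trace w t, htr]
    exact B.eval_inr hsink
  have hmb : medianBit (2*m) w = decide (m % 2 = 1) := by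
    refine medianBit_mkInp hp (by omega) hSc hnd hvb hTb1 ?_
    rw [hlen]
    exact medianM1 m ε (by omega) (by omega)
  -- second completion
  set Tf₂ := tinyS (m-1) ∪ insert u' (hugeS m (m - t)) with hTf₂
  have hu'huge : u' ∉ hugeS m (m - t) := by
    intro hz; have := (mem_hugeS m).mp hz; omega
  have hd2 : Disjoint (tinyS (m-1)) (insert u' (hugeS m (m - t))) := by
    rw [Finset.disjoint_left]
    intro z hz hz'
    have := mem_tinyS.mp hz
    rw [Finset.mem_insert] at hz'
    rcases hz' with rfl | hz'
    · omega
    · have := (mem_hugeS m).mp hz'; omega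
  have hTf₂card : Tf₂.card = 2*m - t := by
    rw [hTf₂, Finset.card_union_of_disjoint hd2, tinyS_card,
      Finset.card_insert_of_notMem hu'huge, hugeS_card]
    omega
  have hc2 : Fintype.card (Sc : Type) = Fintype.card (Tf₂ : Type) := by
    rw [Fintype.card_coe, Fintype.card_coe, hScCard, hTf₂card]
  have hTb2 : ∀ z ∈ Tf₂, 1 ≤ z ∧ z ≤ 2*(2*m) := by
    intro z hz
    rw [hTf₂, Finset.mem_union] at hz
    rcases hz with hz | hz
    · have := mem_tinyS.mp hz; omega
    · rw [Finset.mem_insert] at hz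
      rcases hz with rfl | hz
      · omega
      · have := (mem_hugeS m).mp hz; omega
  have hdisj2 : ∀ k < L.length, avals m ε k ∉ Tf₂ := by
    intro k hk hmem
    rw [hlen] at hk
    have h1 := avals_ge m ε (k := k)
    have h2 := avals_le m ε hk
    rw [hTf₂, Finset.mem_union] at hmem
    rcases hmem with hz | hz
    · have := mem_tinyS.mp hz; omega
    · rw [Finset.mem_insert] at hz
      rcases hz with hz | hz
      · refine u'_notmem m ε (t := t) ?_
        rw [← hu', ← hz]
        exact Finset.mem_image.mpr ⟨k, Finset.mem_range.mpr hk, rfl⟩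
      · have := (mem_hugeS m).mp hz; omega
  set w' := mkInp hp L (avals m ε) Sc Tf₂ hc2 with hw'
  have winj' : Function.Injective w' := mkInp_injective hp hSc hnd hvi hdisj2 hvb hTb2
  have htr' : B.trace w' t = (B.awalk a t).1 := by
    apply trace_eq B hp ε hint
    intro k hk
    exact mkInp_read hp hSc hnd (by rw [hlen]; exact hk)
  have heval' : B.eval w' B.source = b := by
    rw [← B.eval_trace w' t, htr']
    exact B.eval_inr hsink
  have hmb' : medianBit (2*m) w' = decide ((m+1) % 2 = 1) := by
    refine medianBit_mkInp hp (by omega) hSc hnd hvb hTb2 ?_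
    rw [hlen, hTf₂, hu']
    exact medianM2 m ε (by omega) (by omega)
  have hfin : decide (m % 2 = 1) = decide ((m+1) % 2 = 1) := by
    rw [← hmb, ← hmb', ← hCorr w winj, ← hCorr w' winj', heval, heval']
  rw [decide_eq_decide] at hfin
  omega

lemma no_early (hRO : B.ReadOnce)
    (hCorr : ∀ x, Function.Injective x → B.eval x B.source = medianBit (2*m) x)
    (hm : 5 ≤ m) (hp : 0 < 2*m) (ε : ℕ → Bool) :
    ∀ t, t < m → B.Internal ((B.awalk (feedI hp ε) t).1) := by
  intro t
  induction t using Nat.strong_induction_on with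
  | _ t ih =>
    intro ht
    have hint : ∀ k < t, B.Internal ((B.awalk (feedI hp ε) k).1) :=
      fun k hk => ih k hk (by omega)
    rcases hlab : B.label ((B.awalk (feedI hp ε) t).1) with ⟨i, f⟩ | b
    · exact ⟨i, f, hlab⟩
    · exact (sink_contra B hRO hCorr hm hp ε ht hint hlab).elim

lemma merge_contra (hRO : B.ReadOnce)
    (hCorr : ∀ x, Function.Injective x → B.eval x B.source = medianBit (2*m) x)
    (hm : 5 ≤ m) (hp : 0 < 2*m) (ε δ : ℕ → Bool)
    {r : ℕ} (hr : r < m) (hne : ε r ≠ δ r)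
    (hv : (B.awalk (feedI hp ε) m).1 = (B.awalk (feedI hp δ) m).1) : False := by
  have hintε : ∀ k < m, B.Internal ((B.awalk (feedI hp ε) k).1) :=
    fun k hk => no_early B hRO hCorr hm hp ε k hk
  have hintδ : ∀ k < m, B.Internal ((B.awalk (feedI hp δ) k).1) :=
    fun k hk => no_early B hRO hCorr hm hp δ k hk
  set aε := feedI hp ε with haε
  set aδ := feedI hp δ with haδ
  set L₁ := (B.awalk aε m).2 with hL₁
  set L₂ := (B.awalk aδ m).2 with hL₂
  have hlen₁ : L₁.length = m := B.awalk_len aε hintε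
  have hlen₂ : L₂.length = m := B.awalk_len aδ hintδ
  have hnd₁ : L₁.Nodup := awalk_list_nodup B hRO aε hintε
  have hnd₂ : L₂.Nodup := awalk_list_nodup B hRO aδ hintδ
  set v := (B.awalk aε m).1 with hvdef
  by_cases hS : L₁.toFinset = L₂.toFinset
  -- CASE A : the two walks read the same set of positions
  · set Sc : Finset (Fin (2*m)) := Finset.univ \ L₁.toFinset with hScdef
    have hSc₂ : Sc = Finset.univ \ L₂.toFinset := by rw [hScdef, hS]
    have hScCard : Sc.card = m := by
      rw [hScdef, Finset.card_sdiff_of_subset (Finset.subset_univ _), Finset.card_univ, Fintype.card_fin,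
        List.toFinset_card_of_nodup hnd₁, hlen₁]
      omega
    set Tf : Finset ℕ := tinyS (m-1-r) ∪ hugeS m (r+1) with hTf
    have hd : Disjoint (tinyS (m-1-r)) (hugeS m (r+1)) := by
      rw [Finset.disjoint_left]
      intro z hz hz'
      have := mem_tinyS.mp hz; have := (mem_hugeS m).mp hz'; omega
    have hTfCard : Tf.card = m := by
      rw [hTf, Finset.card_union_of_disjoint hd, tinyS_card, hugeS_card]; omega
    have hc : Fintype.card (Sc : Type) = Fintype.card (Tf : Type) := by
      rw [Fintype.card_coe, Fintype.card_coe, hScCard, hTfCard]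
    have hTb : ∀ z ∈ Tf, 1 ≤ z ∧ z ≤ 2*(2*m) := by
      intro z hz
      rw [hTf, Finset.mem_union] at hz
      rcases hz with hz | hz
      · have := mem_tinyS.mp hz; omega
      · have := (mem_hugeS m).mp hz; omega
    have hvbε : ∀ k < L₁.length, 1 ≤ avals m ε k ∧ avals m ε k ≤ 2*(2*m) := by
      intro k hk
      rw [hlen₁] at hk
      have := avals_ge m ε (k := k); have := avals_le m ε hk; omega
    have hvbδ : ∀ k < L₂.length, 1 ≤ avals m δ k ∧ avals m δ k ≤ 2*(2*m) := by
      intro k hk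
      rw [hlen₂] at hk
      have := avals_ge m δ (k := k); have := avals_le m δ hk; omega
    have hdisjε : ∀ k < L₁.length, avals m ε k ∉ Tf := by
      intro k hk hmem
      rw [hlen₁] at hk
      have := avals_ge m ε (k := k); have := avals_le m ε hk
      rw [hTf, Finset.mem_union] at hmem
      rcases hmem with hz | hz
      · have := mem_tinyS.mp hz; omega
      · have := (mem_hugeS m).mp hz; omega
    have hdisjδ : ∀ k < L₂.length, avals m δ k ∉ Tf := by
      intro k hk hmem
      rw [hlen₂] at hk
      have := avals_ge m δ (k := k); have := avals_le m δ hk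
      rw [hTf, Finset.mem_union] at hmem
      rcases hmem with hz | hz
      · have := mem_tinyS.mp hz; omega
      · have := (mem_hugeS m).mp hz; omega
    set w := mkInp hp L₁ (avals m ε) Sc Tf hc with hwdef
    set w' := mkInp hp L₂ (avals m δ) Sc Tf hc with hw'def
    have winj : Function.Injective w :=
      mkInp_injective hp hScdef hnd₁ (fun k k' _ _ h => avals_inj m ε h) hdisjε hvbε hTb
    have winj' : Function.Injective w' :=
      mkInp_injective hp hSc₂ hnd₂ (fun k k' _ _ h => avals_inj m δ h) hdisjδ hvbδ hTb
    have hagree : ∀ i, i ∉ L₁.toFinset → w i = w' i := by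
      intro i hi
      have hiSc : i ∈ Sc := by rw [hScdef]; simp [hi]
      rw [hwdef, hw'def, mkInp, mkInp]
      congr 1
      rw [mkNat, dif_pos hiSc, mkNat, dif_pos hiSc]
    have heq : B.eval w v = B.eval w' v := by
      refine B.eval_invariance hRO w w' L₁.toFinset hagree (B.rank v) v (B.nlist aε m)
        le_rfl (B.nlist_chain aε hintε) (B.nlist_getLast aε m) ?_ ?_
      · intro j hj
        exact mem_map_qIdx B aε hintε (List.mem_toFinset.mp hj)
      · intro j hj
        exact qIdx_not_read B hRO aε hintε (List.mem_toFinset.mp hj)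
    have htr : B.trace w m = v := by
      apply trace_eq B hp ε hintε
      intro k hk
      exact mkInp_read hp hScdef hnd₁ (by rw [hlen₁]; exact hk)
    have htr' : B.trace w' m = v := by
      rw [hvdef, hvdef.symm.trans hv]
      apply trace_eq B hp δ hintδ
      intro k hk
      exact mkInp_read hp hSc₂ hnd₂ (by rw [hlen₂]; exact hk)
    have hmb : medianBit (2*m) w = decide (avals m ε r % 2 = 1) := by
      refine medianBit_mkInp hp (by omega) hScdef hnd₁ hvbε hTb ?_
      rw [hlen₁]
      exact medianM3 m ε (by omega) hr
    have hmb' : medianBit (2*m) w' = decide (avals m δ r % 2 = 1) := by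
      refine medianBit_mkInp hp (by omega) hSc₂ hnd₂ hvbδ hTb ?_
      rw [hlen₂]
      exact medianM3 m δ (by omega) hr
    have hfin : decide (avals m ε r % 2 = 1) = decide (avals m δ r % 2 = 1) := by
      rw [← hmb, ← hmb', ← hCorr w winj, ← hCorr w' winj',
        ← B.eval_trace w m, ← B.eval_trace w' m, htr, htr']
      exact heq
    rw [decide_eq_decide] at hfin
    have h1 : (ε r).toNat ≠ (δ r).toNat := by
      cases hx : ε r <;> cases hy : δ r <;> simp_all
    have h2 : (ε r).toNat ≤ 1 := by cases (ε r) <;> simp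
    have h3 : (δ r).toNat ≤ 1 := by cases (δ r) <;> simp
    unfold avals at hfin
    omega
  -- CASE B : the walks read different position sets
  · have hdiff : ∃ j, j ∈ L₂.toFinset ∧ j ∉ L₁.toFinset := by
      by_contra h
      push_neg at h
      refine hS (Finset.eq_of_subset_of_card_le (fun x hx => h x hx) ?_).symm
      rw [List.toFinset_card_of_nodup hnd₁, List.toFinset_card_of_nodup hnd₂, hlen₁, hlen₂]
    obtain ⟨j, hj₂, hj₁⟩ := hdiff
    have hjL₁ : j ∉ L₁ := fun hh => hj₁ (List.mem_toFinset.mpr hh)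
    have hjL₂ : j ∈ L₂ := List.mem_toFinset.mp hj₂
    set L' : List (Fin (2*m)) := L₁ ++ [j] with hL'
    have hnd' : L'.Nodup := by
      rw [hL', List.nodup_append]
      refine ⟨hnd₁, List.nodup_singleton _, ?_⟩
      intro x hx x' hx'
      rw [List.mem_singleton] at hx'
      subst hx'
      exact fun h => hjL₁ (h ▸ hx)
    have hlen' : L'.length = m + 1 := by rw [hL']; simp [hlen₁]
    set u' := if ε 0 ∧ 0 < m then m+2 else m+1 with hu'
    have hu'b : m+1 ≤ u' ∧ u' ≤ m+2 := by rw [hu']; split <;> omega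
    set vw : ℕ → ℕ := fun k => if k < m then avals m ε k else m with hvw
    set vw' : ℕ → ℕ := fun k => if k < m then avals m ε k else u' with hvw'
    set Sc : Finset (Fin (2*m)) := Finset.univ \ L'.toFinset with hScdef
    have hScCard : Sc.card = m - 1 := by
      rw [hScdef, Finset.card_sdiff_of_subset (Finset.subset_univ _), Finset.card_univ, Fintype.card_fin,
        List.toFinset_card_of_nodup hnd', hlen']
      omega
    set Tf : Finset ℕ := tinyS (m-1) with hTf
    have hc : Fintype.card (Sc : Type) = Fintype.card (Tf : Type) := by
      rw [Fintype.card_coe, Fintype.card_coe, hScCard, hTf, tinyS_card]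
    have hTb : ∀ z ∈ Tf, 1 ≤ z ∧ z ≤ 2*(2*m) := by
      intro z hz
      rw [hTf] at hz
      have := mem_tinyS.mp hz; omega
    have hvb : ∀ k < L'.length, 1 ≤ vw k ∧ vw k ≤ 2*(2*m) := by
      intro k hk
      simp only [hvw]
      split
      · next h =>
          have := avals_ge m ε (k := k); have := avals_le m ε h; omega
      · omega
    have hvb' : ∀ k < L'.length, 1 ≤ vw' k ∧ vw' k ≤ 2*(2*m) := by
      intro k hk
      simp only [hvw']
      split
      · next h =>
          have := avals_ge m ε (k := k); have := avals_le m ε h; omega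
      · omega
    have hvi : ∀ k k', k < L'.length → k' < L'.length → vw k = vw k' → k = k' := by
      intro k k' hk hk' hkk
      rw [hlen'] at hk hk'
      simp only [hvw] at hkk
      by_cases h1 : k < m <;> by_cases h2 : k' < m
      · rw [if_pos h1, if_pos h2] at hkk
        exact avals_inj m ε hkk
      · rw [if_pos h1, if_neg h2] at hkk
        have := avals_ge m ε (k := k); omega
      · rw [if_neg h1, if_pos h2] at hkk
        have := avals_ge m ε (k := k'); omega
      · omega
    have hvi' : ∀ k k', k < L'.length → k' < L'.length → vw' k = vw' k' → k = k' := by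
      intro k k' hk hk' hkk
      rw [hlen'] at hk hk'
      simp only [hvw'] at hkk
      by_cases h1 : k < m <;> by_cases h2 : k' < m
      · rw [if_pos h1, if_pos h2] at hkk
        exact avals_inj m ε hkk
      · rw [if_pos h1, if_neg h2] at hkk
        exact absurd (Finset.mem_image.mpr ⟨k, Finset.mem_range.mpr h1, hkk⟩)
          (hu' ▸ u'_notmem m ε (t := m))
      · rw [if_neg h1, if_pos h2] at hkk
        exact absurd (Finset.mem_image.mpr ⟨k', Finset.mem_range.mpr h2, hkk.symm⟩)
          (hu' ▸ u'_notmem m ε (t := m))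
      · omega
    have hdisj : ∀ k < L'.length, vw k ∉ Tf := by
      intro k hk hmem
      rw [hTf] at hmem
      have h2 := mem_tinyS.mp hmem
      simp only [hvw] at h2
      by_cases h1 : k < m
      · rw [if_pos h1] at h2
        have := avals_ge m ε (k := k); omega
      · rw [if_neg h1] at h2
        omega
    have hdisj' : ∀ k < L'.length, vw' k ∉ Tf := by
      intro k hk hmem
      rw [hTf] at hmem
      have h2 := mem_tinyS.mp hmem
      simp only [hvw'] at h2
      by_cases h1 : k < m
      · rw [if_pos h1] at h2
        have := avals_ge m ε (k := k); omega
      · rw [if_neg h1] at h2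
        omega
    set w := mkInp hp L' vw Sc Tf hc with hwdef
    set w' := mkInp hp L' vw' Sc Tf hc with hw'def
    have winj : Function.Injective w := mkInp_injective hp hScdef hnd' hvi hdisj hvb hTb
    have winj' : Function.Injective w' := mkInp_injective hp hScdef hnd' hvi' hdisj' hvb' hTb
    have hagree : ∀ i, i ∉ ({j} : Finset (Fin (2*m))) → w i = w' i := by
      intro i hi
      rw [Finset.mem_singleton] at hi
      rw [hwdef, hw'def, mkInp, mkInp]
      congr 1
      rw [mkNat, mkNat]
      by_cases hiSc : i ∈ Sc
      · rw [dif_pos hiSc, dif_pos hiSc]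
      · rw [dif_neg hiSc, dif_neg hiSc]
        have hiL' : i ∈ L' := by
          by_contra hh
          exact hiSc (by rw [hScdef]; simp [hh])
        have hiL₁ : i ∈ L₁ := by
          rw [hL', List.mem_append] at hiL'
          rcases hiL' with h | h
          · exact h
          · rw [List.mem_singleton] at h; exact absurd h hi
        have hidx : L'.idxOf i = L₁.idxOf i := by
          rw [hL']; exact List.idxOf_append_of_mem hiL₁
        have hlt0 : L₁.idxOf i < L₁.length := List.idxOf_lt_length_iff.mpr hiL₁
        have hlt : L₁.idxOf i < m := by omega
        rw [hidx]
        simp only [hvw, hvw']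
        rw [if_pos hlt, if_pos hlt]
    have heq : B.eval w v = B.eval w' v := by
      refine B.eval_invariance hRO w w' {j} hagree (B.rank v) v (B.nlist aδ m)
        le_rfl (B.nlist_chain aδ hintδ) ?_ ?_ ?_
      · rw [B.nlist_getLast aδ m]
        exact (hvdef.symm.trans hv).symm
      · intro j' hj'
        rw [Finset.mem_singleton] at hj'
        subst hj'
        exact mem_map_qIdx B aδ hintδ hjL₂
      · intro j' hj'
        rw [Finset.mem_singleton] at hj'
        subst hj'
        rw [hvdef, hvdef.symm.trans hv]
        exact qIdx_not_read B hRO aδ hintδ hjL₂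
    have hread : ∀ k (hk : k < m), ∀ w₀ : Fin (2*m) → Fin (2*(2*m)),
        (∀ kk (hkk : kk < L'.length), w₀ (L'.get ⟨kk, hkk⟩) = fv hp (vw kk) ∨
          w₀ (L'.get ⟨kk, hkk⟩) = fv hp (vw' kk)) → True := fun _ _ _ _ => trivial
    have htr : B.trace w m = v := by
      apply trace_eq B hp ε hintε
      intro k hk
      have hkL' : k < L'.length := by omega
      have hkl₁ : k < L₁.length := by rw [hlen₁]; exact hk
      have hget : L'.get ⟨k, hkL'⟩ = L₁.get ⟨k, hkl₁⟩ := List.getElem_append_left hkl₁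
      have h1 : w (L'.get ⟨k, hkL'⟩) = fv hp (vw k) := mkInp_read hp hScdef hnd' hkL'
      rw [hget] at h1
      have h2 : fv hp (vw k) = aε k := by
        simp only [hvw]
        rw [if_pos hk]
        rfl
      exact h1.trans h2
    have htr' : B.trace w' m = v := by
      apply trace_eq B hp ε hintε
      intro k hk
      have hkL' : k < L'.length := by omega
      have hkl₁ : k < L₁.length := by rw [hlen₁]; exact hk
      have hget : L'.get ⟨k, hkL'⟩ = L₁.get ⟨k, hkl₁⟩ := List.getElem_append_left hkl₁
      have h1 : w' (L'.get ⟨k, hkL'⟩) = fv hp (vw' k) := mkInp_read hp hScdef hnd' hkL'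
      rw [hget] at h1
      have h2 : fv hp (vw' k) = aε k := by
        simp only [hvw']
        rw [if_pos hk]
        rfl
      exact h1.trans h2
    have hmb : medianBit (2*m) w = decide (m % 2 = 1) := by
      refine medianBit_mkInp hp (by omega) hScdef hnd' hvb hTb ?_
      rw [hlen', hTf, hvw]
      rw [reshape1 m ε (by omega)]
      exact medianM1 m ε (by omega) (le_refl m)
    have hmb' : medianBit (2*m) w' = decide ((m+1) % 2 = 1) := by
      refine medianBit_mkInp hp (by omega) hScdef hnd' hvb' hTb ?_
      rw [hlen', hTf, hvw', hu']
      rw [reshape2 m ε (by omega)]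
      exact medianM2 m ε (by omega) (le_refl m)
    have hfin : decide (m % 2 = 1) = decide ((m+1) % 2 = 1) := by
      rw [← hmb, ← hmb', ← hCorr w winj, ← hCorr w' winj',
        ← B.eval_trace w m, ← B.eval_trace w' m, htr, htr']
      exact heq
    rw [decide_eq_decide] at hfin
    omega

lemma card_lb (hRO : B.ReadOnce)
    (hCorr : ∀ x, Function.Injective x → B.eval x B.source = medianBit (2*m) x)
    (hm : 5 ≤ m) : 2^m ≤ Fintype.card B.V := by
  have hp : 0 < 2*m := by omega
  set F : (Fin m → Bool) → B.V :=
    fun ε => (B.awalk (feedI hp (fun k => if h : k < m then ε ⟨k, h⟩ else false)) m).1 with hF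
  have hFinj : Function.Injective F := by
    intro ε δ hFe
    by_contra hne
    obtain ⟨i, hi⟩ := Function.ne_iff.mp hne
    refine merge_contra B hRO hCorr hm hp
      (fun k => if h : k < m then ε ⟨k, h⟩ else false)
      (fun k => if h : k < m then δ ⟨k, h⟩ else false)
      (r := (i : ℕ)) i.isLt ?_ hFe
    rw [dif_pos i.isLt, dif_pos i.isLt]
    simpa using hi
  calc 2^m = Fintype.card (Fin m → Bool) := by simp
    _ ≤ Fintype.card B.V := Fintype.card_le_of_injective F hFinj

end Main


/-- Any read-once `(2n)`-way branching program whose output on every injective input equals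
`MedianBit` has more than `2^(n^(1/65))` nodes, for all sufficiently large even `n`. -/
theorem readOnce_median_size_lb :
    ∃ c : ℕ, 0 < c ∧
      ∀ n : ℕ, Even n → c ≤ n →
        ∀ B : BranchingProgram n (Fin (2 * n)) Bool, B.ReadOnce →
          (∀ x : Fin n → Fin (2 * n), Function.Injective x →
            B.eval x B.source = medianBit n x) →
          (2 : ℝ) ^ ((n : ℝ) ^ ((1 : ℝ) / 65)) < (Fintype.card B.V : ℝ) := by
  refine ⟨100, by norm_num, ?_⟩
  intro n hev hcn B hRO hCorr
  obtain ⟨mm, hmm⟩ : ∃ mm, n = 2*mm := by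
    rcases hev with ⟨k, hk⟩; exact ⟨k, by omega⟩
  subst hmm
  have hm : 5 ≤ mm := by omega
  have hcard : 2^mm ≤ Fintype.card B.V := card_lb B hRO hCorr hm
  have h0 : (1:ℝ) ≤ ((2*mm : ℕ):ℝ) := by
    rw [Nat.one_le_cast]; omega
  have h1 : ((2*mm:ℕ):ℝ) ^ ((1:ℝ)/65) ≤ ((2*mm:ℕ):ℝ) ^ ((1:ℝ)/2) :=
    Real.rpow_le_rpow_of_exponent_le h0 (by norm_num)
  have h2 : ((2*mm:ℕ):ℝ) ^ ((1:ℝ)/2) < (mm:ℝ) := by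
    rw [← Real.sqrt_eq_rpow]
    rw [Real.sqrt_lt' (by exact_mod_cast show 0 < mm by omega)]
    push_cast
    nlinarith [show (5:ℝ) ≤ (mm:ℝ) from by exact_mod_cast hm]
  have h3 : (2:ℝ) ^ (((2*mm:ℕ):ℝ) ^ ((1:ℝ)/65)) < (2:ℝ) ^ ((mm:ℝ)) :=
    (Real.rpow_lt_rpow_left_iff (by norm_num)).mpr (lt_of_le_of_lt h1 h2)
  have h4 : (2:ℝ) ^ ((mm:ℝ)) = ((2^mm : ℕ):ℝ) := by
    rw [show ((mm:ℝ)) = ((mm:ℕ):ℝ) from rfl, Real.rpow_natCast]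
    push_cast
    ring
  calc (2:ℝ) ^ (((2*mm:ℕ)):ℝ) ^ ((1:ℝ)/65) < (2:ℝ) ^ ((mm:ℝ)) := h3
    _ = ((2^mm : ℕ):ℝ) := h4
    _ ≤ (Fintype.card B.V : ℝ) := Nat.cast_le.mpr hcard
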